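/- Let V_1 and V_2 be finite-dimensional real vector spaces, let R_1 ⊆ V_1 and R_2 ⊆ V_2 be finite sets, let Δ_i be the convex hull of R_i, and assume 0 ∈ Δ_i for i = 1, 2. Let u_1 ≠ 0 be an extreme point of Δ_1 and u_2 ≠ 0 an extreme point of Δ_2. In V_1 × V_2, let P be the convex hull of (R_1 × {0}) ∪ ({0} × R_2), let C be the convex cone generated by P − (u_1, 0), and let w = (−u_1, u_2). Then the ray {t·w : t ≥ 0} is an extreme subset (a face) of C: it is contained in C, and whenever a point of the ray lies in the open segment joining two points of C, both of those points belong to the ray. -/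

import Mathlib

noncomputable section

/-- The convex cone generated by a set `S`: all finite sums of nonnegative real multiples
of elements of `S`. -/
def coneGen {V : Type*} [AddCommMonoid V] [Module ℝ V] (S : Set V) : Set V :=
  {x | ∃ (n : ℕ) (c : Fin n → ℝ) (f : Fin n → V),
    (∀ i, 0 ≤ c i) ∧ (∀ i, f i ∈ S) ∧ x = ∑ i, c i • f i}

section aux

variable {V : Type*} [AddCommGroup V] [Module ℝ V]

/-- If `r • u ∈ Δ`, `0 ∈ Δ`, and `u ≠ 0` is extreme in `Δ`, then `r ≤ 1`. -/
lemma aux_scale_le {Δ : Set V} (h0 : (0 : V) ∈ Δ) {u : V}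
    (hu : u ∈ Δ.extremePoints ℝ) (hu0 : u ≠ 0)
    {r : ℝ} (hr : r • u ∈ Δ) : r ≤ 1 := by
  by_contra h
  push_neg at h
  have hrpos : (0 : ℝ) < r := lt_trans one_pos h
  have hmem : u ∈ openSegment ℝ (r • u) (0 : V) := by
    refine ⟨1 / r, 1 - 1 / r, by positivity, by
      have : 1 / r < 1 := by
        rw [div_lt_one hrpos]; exact h
      linarith, by ring, ?_⟩
    rw [smul_smul, smul_zero, add_zero, one_div, inv_mul_cancel₀ (ne_of_gt hrpos), one_smul]
  have := hu.2 hr h0 hmem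
  exact hu0 (hu.2 h0 hr (by rw [openSegment_symm]; exact hmem)).symm

/-- Key lemma: a nonnegative combination of two points of `Δ` equal to `r • u`
forces `r ≤ a₁ + a₂`, with equality forcing the points to be `u`. -/
lemma aux_combo {Δ : Set V} (hΔ : Convex ℝ Δ) (h0 : (0 : V) ∈ Δ) {u : V}
    (hu : u ∈ Δ.extremePoints ℝ) (hu0 : u ≠ 0)
    {a₁ a₂ r : ℝ} {x₁ x₂ : V} (ha₁ : 0 ≤ a₁) (ha₂ : 0 ≤ a₂)
    (hx₁ : x₁ ∈ Δ) (hx₂ : x₂ ∈ Δ)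
    (heq : a₁ • x₁ + a₂ • x₂ = r • u) :
    r ≤ a₁ + a₂ ∧ (r = a₁ + a₂ → a₁ • x₁ = a₁ • u ∧ a₂ • x₂ = a₂ • u) := by
  rcases eq_or_lt_of_le (add_nonneg ha₁ ha₂) with hS | hS
  · have ha₁' : a₁ = 0 := by linarith [ha₁, ha₂, hS.symm ▸ (le_refl (a₁ + a₂))]
    have ha₂' : a₂ = 0 := by linarith
    subst ha₁' ha₂'
    simp only [zero_smul, add_zero] at heq
    have hr0 : r = 0 := by
      rcases smul_eq_zero.mp heq.symm with h | h
      · exact h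
      · exact absurd h hu0
    constructor
    · simp [hr0]
    · intro _; simp
  · -- S := a₁ + a₂ > 0
    set S := a₁ + a₂ with hSdef
    have hSne : S ≠ 0 := ne_of_gt hS
    have hw₁ : 0 ≤ a₁ / S := div_nonneg ha₁ hS.le
    have hw₂ : 0 ≤ a₂ / S := div_nonneg ha₂ hS.le
    have hwsum : a₁ / S + a₂ / S = 1 := by field_simp; exact hSdef.symm
    have hxmem : (a₁ / S) • x₁ + (a₂ / S) • x₂ ∈ Δ := hΔ hx₁ hx₂ hw₁ hw₂ hwsum
    have hxeq : (a₁ / S) • x₁ + (a₂ / S) • x₂ = (r / S) • u := by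
      have := congrArg (fun z => (S⁻¹ : ℝ) • z) heq
      simp only [smul_add, smul_smul] at this
      rw [div_eq_inv_mul, div_eq_inv_mul, div_eq_inv_mul]
      convert this using 2 <;> ring_nf
    have hrS : r / S ≤ 1 := aux_scale_le h0 hu hu0 (hxeq ▸ hxmem)
    have hrle : r ≤ S := by
      rw [div_le_one hS] at hrS; exact hrS
    refine ⟨hrle, fun hrEq => ?_⟩
    -- r = S, so the convex combination equals u
    have hueq : (a₁ / S) • x₁ + (a₂ / S) • x₂ = u := by
      rw [hxeq, hrEq, div_self hSne, one_smul]
    rcases eq_or_lt_of_le ha₁ with h1 | h1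
    · -- a₁ = 0
      have ha₁' : a₁ = 0 := h1.symm
      have hSa : S = a₂ := by rw [hSdef, ha₁', zero_add]
      have : (a₂ / S) = 1 := by rw [hSa, div_self (by rw [← hSa]; exact hSne)]
      have hx₂u : x₂ = u := by
        rw [ha₁'] at hueq; simp [this] at hueq; exact hueq
      exact ⟨by rw [ha₁', zero_smul, zero_smul], by rw [hx₂u]⟩
    rcases eq_or_lt_of_le ha₂ with h2 | h2
    · have ha₂' : a₂ = 0 := h2.symm
      have hSa : S = a₁ := by rw [hSdef, ha₂', add_zero]
      have : (a₁ / S) = 1 := by rw [hSa, div_self (by rw [← hSa]; exact hSne)]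
      have hx₁u : x₁ = u := by
        rw [ha₂'] at hueq; simp [this] at hueq; exact hueq
      exact ⟨by rw [hx₁u], by rw [ha₂', zero_smul, zero_smul]⟩
    · -- both positive: u in open segment
      have hmem : u ∈ openSegment ℝ x₁ x₂ :=
        ⟨a₁ / S, a₂ / S, div_pos h1 hS, div_pos h2 hS, hwsum, hueq⟩
      have e₁ := hu.2 hx₁ hx₂ hmem
      have e₂ := hu.2 hx₂ hx₁ (by rw [openSegment_symm]; exact hmem)
      exact ⟨by rw [e₁], by rw [e₂]⟩

/-- Combine two nonnegative multiples of points of a convex set containing 0. -/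
lemma aux_combine {Δ : Set V} (hΔ : Convex ℝ Δ) (h0 : (0 : V) ∈ Δ)
    {a a' : ℝ} (ha : 0 ≤ a) (ha' : 0 ≤ a') {x x' : V} (hx : x ∈ Δ) (hx' : x' ∈ Δ) :
    ∃ z ∈ Δ, a • x + a' • x' = (a + a') • z := by
  rcases eq_or_lt_of_le (add_nonneg ha ha') with hS | hS
  · have h1 : a = 0 := by linarith
    have h2 : a' = 0 := by linarith
    exact ⟨0, h0, by simp [h1, h2]⟩
  · refine ⟨(a / (a + a')) • x + (a' / (a + a')) • x', hΔ hx hx'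
      (div_nonneg ha hS.le) (div_nonneg ha' hS.le) (by field_simp), ?_⟩
    have hne : a + a' ≠ 0 := ne_of_gt hS
    rw [smul_add, smul_smul, smul_smul]
    congr 1 <;> rw [mul_div_cancel₀ _ hne]

lemma coneGen_subset {S D : Set V}
    (hSD : S ⊆ D) (h0 : (0 : V) ∈ D)
    (hadd : ∀ x ∈ D, ∀ y ∈ D, x + y ∈ D)
    (hsmul : ∀ c : ℝ, 0 ≤ c → ∀ x ∈ D, c • x ∈ D) : coneGen S ⊆ D := by
  rintro x ⟨n, c, f, hc, hf, rfl⟩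
  exact Finset.sum_induction _ (· ∈ D) (fun a b ha hb => hadd a ha b hb) h0
    (fun i _ => hsmul (c i) (hc i) (f i) (hSD (hf i)))

end aux

theorem stmt8 (V₁ V₂ : Type*)
    [AddCommGroup V₁] [Module ℝ V₁] [FiniteDimensional ℝ V₁]
    [AddCommGroup V₂] [Module ℝ V₂] [FiniteDimensional ℝ V₂]
    (R₁ : Set V₁) (R₂ : Set V₂) (hR₁ : R₁.Finite) (hR₂ : R₂.Finite)
    (h0₁ : (0 : V₁) ∈ convexHull ℝ R₁) (h0₂ : (0 : V₂) ∈ convexHull ℝ R₂)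
    (u₁ : V₁) (hu₁ : u₁ ∈ (convexHull ℝ R₁).extremePoints ℝ) (hu₁0 : u₁ ≠ 0)
    (u₂ : V₂) (hu₂ : u₂ ∈ (convexHull ℝ R₂).extremePoints ℝ) (hu₂0 : u₂ ≠ 0) :
    IsExtreme ℝ
      (coneGen ((fun p => p - (u₁, (0 : V₂))) ''
        convexHull ℝ ((R₁ ×ˢ ({0} : Set V₂)) ∪ (({0} : Set V₁) ×ˢ R₂))))
      {x : V₁ × V₂ | ∃ t : ℝ, 0 ≤ t ∧ x = t • (-u₁, u₂)} := by
  set Δ₁ := convexHull ℝ R₁ with hΔ₁def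
  set Δ₂ := convexHull ℝ R₂ with hΔ₂def
  have hΔ₁ : Convex ℝ Δ₁ := convex_convexHull ℝ R₁
  have hΔ₂ : Convex ℝ Δ₂ := convex_convexHull ℝ R₂
  have hR₁ne : R₁.Nonempty := by
    by_contra h
    rw [Set.not_nonempty_iff_eq_empty] at h
    rw [hΔ₁def, h, convexHull_empty] at h0₁
    exact h0₁
  have hR₂ne : R₂.Nonempty := by
    by_contra h
    rw [Set.not_nonempty_iff_eq_empty] at h
    rw [hΔ₂def, h, convexHull_empty] at h0₂
    exact h0₂
  set D : Set (V₁ × V₂) := {z | ∃ a b : ℝ, ∃ x : V₁, ∃ y : V₂,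
    0 ≤ a ∧ 0 ≤ b ∧ x ∈ Δ₁ ∧ y ∈ Δ₂ ∧ z = (a • x - (a + b) • u₁, b • y)} with hDdef
  -- the generating set is contained in D
  have hSD : ((fun p => p - (u₁, (0 : V₂))) ''
      convexHull ℝ ((R₁ ×ˢ ({0} : Set V₂)) ∪ (({0} : Set V₁) ×ˢ R₂))) ⊆ D := by
    rintro _ ⟨p, hp, rfl⟩
    have hA : (R₁ ×ˢ ({0} : Set V₂)).Nonempty := hR₁ne.prod (Set.singleton_nonempty 0)
    have hB : (({0} : Set V₁) ×ˢ R₂).Nonempty := (Set.singleton_nonempty 0).prod hR₂ne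
    rw [convexHull_union hA hB, mem_convexJoin] at hp
    obtain ⟨a, ha, b, hb, θ₁, θ₂, hθ₁, hθ₂, hθsum, hab⟩ := hp
    rw [convexHull_prod, convexHull_singleton] at ha
    rw [convexHull_prod, convexHull_singleton] at hb
    obtain ⟨ha1, ha2⟩ := ha
    obtain ⟨hb1, hb2⟩ := hb
    simp only [Set.mem_singleton_iff] at ha2 hb1
    refine ⟨θ₁, θ₂, a.1, b.2, hθ₁, hθ₂, ha1, hb2, ?_⟩
    have : p = (θ₁ • a.1, θ₂ • b.2) := by
      rw [← hab]
      ext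
      · simp [hb1]
      · simp [ha2]
    rw [this]
    ext
    · simp only [Prod.fst_sub, Prod.mk_sub_mk]
      rw [hθsum, one_smul]
    · simp
  have hD0 : (0 : V₁ × V₂) ∈ D := ⟨0, 0, 0, 0, le_refl 0, le_refl 0, h0₁, h0₂, by ext <;> simp⟩
  have hDadd : ∀ x ∈ D, ∀ y ∈ D, x + y ∈ D := by
    rintro _ ⟨a, b, x, y, ha, hb, hx, hy, rfl⟩ _ ⟨a', b', x', y', ha', hb', hx', hy', rfl⟩
    obtain ⟨x'', hx'', hxeq⟩ := aux_combine hΔ₁ h0₁ ha ha' hx hx'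
    obtain ⟨y'', hy'', hyeq⟩ := aux_combine hΔ₂ h0₂ hb hb' hy hy'
    refine ⟨a + a', b + b', x'', y'', add_nonneg ha ha', add_nonneg hb hb', hx'', hy'', ?_⟩
    ext
    · simp only [Prod.fst_add]
      rw [← hxeq]
      module
    · simp only [Prod.snd_add]
      rw [← hyeq]
  have hDsmul : ∀ c : ℝ, 0 ≤ c → ∀ x ∈ D, c • x ∈ D := by
    rintro c hc _ ⟨a, b, x, y, ha, hb, hx, hy, rfl⟩
    refine ⟨c * a, c * b, x, y, mul_nonneg hc ha, mul_nonneg hc hb, hx, hy, ?_⟩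
    ext
    · simp only [Prod.smul_fst]
      rw [smul_sub, smul_smul, smul_smul]
      congr 2
      ring
    · simp only [Prod.smul_snd]
      rw [smul_smul]
  have hCD := coneGen_subset hSD hD0 hDadd hDsmul
  -- key step: a point of D summing with another point of D to t • (-u₁, u₂) is on the ray
  have key : ∀ z₁ ∈ D, ∀ z₂ ∈ D, ∀ t : ℝ, z₁ + z₂ = t • ((-u₁, u₂) : V₁ × V₂) →
      (∃ s : ℝ, 0 ≤ s ∧ z₁ = s • ((-u₁, u₂) : V₁ × V₂)) ∧
      (∃ s : ℝ, 0 ≤ s ∧ z₂ = s • ((-u₁, u₂) : V₁ × V₂)) := by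
    rintro _ ⟨a₁, b₁, x₁, y₁, ha₁, hb₁, hx₁, hy₁, rfl⟩
      _ ⟨a₂, b₂, x₂, y₂, ha₂, hb₂, hx₂, hy₂, rfl⟩ t hsum
    have h1 : a₁ • x₁ + a₂ • x₂ = (a₁ + a₂ + b₁ + b₂ - t) • u₁ := by
      have := congrArg Prod.fst hsum
      simp only [Prod.fst_add, Prod.smul_fst] at this
      have h := this
      rw [smul_neg] at h
      -- h : (a₁ • x₁ - (a₁+b₁) • u₁) + (a₂ • x₂ - (a₂+b₂) • u₁) = -(t • u₁)
      have : a₁ • x₁ + a₂ • x₂ = (a₁ + b₁) • u₁ + (a₂ + b₂) • u₁ - t • u₁ := by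
        rw [eq_sub_iff_add_eq]
        linear_combination (norm := module) h
      rw [this]
      module
    have h2 : b₁ • y₁ + b₂ • y₂ = t • u₂ := by
      have := congrArg Prod.snd hsum
      simpa using this
    have key1 := aux_combo hΔ₁ h0₁ hu₁ hu₁0 ha₁ ha₂ hx₁ hx₂ h1
    have key2 := aux_combo hΔ₂ h0₂ hu₂ hu₂0 hb₁ hb₂ hy₁ hy₂ h2
    have hBle : b₁ + b₂ ≤ t := by linarith [key1.1]
    have htle : t ≤ b₁ + b₂ := key2.1
    have hBt : b₁ + b₂ = t := le_antisymm hBle htle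
    obtain ⟨e₁, e₂⟩ := key1.2 (by linarith)
    obtain ⟨f₁, f₂⟩ := key2.2 hBt.symm
    constructor
    · refine ⟨b₁, hb₁, ?_⟩
      ext
      · simp only [Prod.smul_fst]
        rw [e₁]
        module
      · simp only [Prod.smul_snd]
        rw [f₁]
    · refine ⟨b₂, hb₂, ?_⟩
      ext
      · simp only [Prod.smul_fst]
        rw [e₂]
        module
      · simp only [Prod.smul_snd]
        rw [f₂]
  constructor
  · -- ray ⊆ C
    rintro _ ⟨t, ht, rfl⟩
    refine ⟨1, fun _ => t, fun _ => ((-u₁, u₂) : V₁ × V₂), fun _ => ht, fun _ => ?_, ?_⟩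
    · refine ⟨((0 : V₁), u₂), ?_, ?_⟩
      · apply convexHull_mono Set.subset_union_right
        rw [convexHull_prod, convexHull_singleton]
        exact ⟨rfl, hu₂.1⟩
      · ext
        · simp
        · simp
    · rw [Fin.sum_univ_one]
  · -- extremeness
    rintro z₁ hz₁ z₂ hz₂ _ ⟨t, ht, rfl⟩ hseg
    obtain ⟨α, β, hα, hβ, hαβ, habz⟩ := hseg
    have hd₁ : α • z₁ ∈ D := hDsmul α hα.le z₁ (hCD hz₁)
    have hd₂ : β • z₂ ∈ D := hDsmul β hβ.le z₂ (hCD hz₂)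
    obtain ⟨⟨s₁, hs₁, hz₁'⟩, ⟨s₂, hs₂, hz₂'⟩⟩ := key _ hd₁ _ hd₂ t habz
    · refine ⟨s₁ / α, div_nonneg hs₁ hα.le, ?_⟩
      have : z₁ = α⁻¹ • (α • z₁) := by
        rw [smul_smul, inv_mul_cancel₀ (ne_of_gt hα), one_smul]
      rw [this, hz₁', smul_smul, div_eq_inv_mul]

end
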